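/- Let H be a finite-dimensional Hopf algebra with right integral μ_R and right cointegral e_R normalized by μ_R(e_R) = 1. Define a = μ_R(e_{R(2)}) e_{R(1)} ∈ H and α = μ_R(? e_R) ∈ H* (i.e. α(x) = μ_R(x e_R)). Then a is a group-like element: Δ(a) = a ⊗ a and ε(a) = 1. -/

import Mathlib

open Coalgebra TensorProduct

namespace DistinguishedAux

open HopfAlgebra

universe w

variable {K H : Type*} [Field K] [Ring H] [HopfAlgebra K H]

/-- A representation of `comul x` whose index type lives in an arbitrary universe. -/
lemma canRepr_aux (x : H) :
    ∑ k ∈ (Finset.univ : Finset (ULift (Fin (Fintype.card ↥((ℛ K x).index))))),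
      (ℛ K x).left ((Fintype.equivFin ↥((ℛ K x).index)).symm k.down).1 ⊗ₜ[K]
        (ℛ K x).right ((Fintype.equivFin ↥((ℛ K x).index)).symm k.down).1 =
      CoalgebraStruct.comul (R := K) x := by
  set r := ℛ K x with hrdef
  set e := Fintype.equivFin ↥(r.index) with hedef
  calc ∑ k ∈ (Finset.univ : Finset (ULift (Fin (Fintype.card ↥(r.index))))),
        r.left (e.symm k.down).1 ⊗ₜ[K] r.right (e.symm k.down).1
      = ∑ j : Fin (Fintype.card ↥(r.index)),
          r.left (e.symm j).1 ⊗ₜ[K] r.right (e.symm j).1 :=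
        Fintype.sum_equiv Equiv.ulift
          (fun k => r.left (e.symm k.down).1 ⊗ₜ[K] r.right (e.symm k.down).1)
          (fun j => r.left (e.symm j).1 ⊗ₜ[K] r.right (e.symm j).1) (fun k => rfl)
    _ = ∑ i : ↥(r.index), r.left i.1 ⊗ₜ[K] r.right i.1 :=
        Fintype.sum_equiv e.symm
          (fun j => r.left (e.symm j).1 ⊗ₜ[K] r.right (e.symm j).1)
          (fun i => r.left i.1 ⊗ₜ[K] r.right i.1) (fun j => rfl)
    _ = ∑ i ∈ r.index, r.left i ⊗ₜ[K] r.right i := by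
        rw [Finset.univ_eq_attach]
        exact Finset.sum_attach r.index (fun i => r.left i ⊗ₜ[K] r.right i)
    _ = CoalgebraStruct.comul (R := K) x := r.eq

/-- A representation of `comul x` whose index type lives in an arbitrary universe. -/
noncomputable def canRepr (x : H) :
    Coalgebra.Repr K x (ULift.{w} (Fin (Fintype.card ↥((ℛ K x).index)))) :=
  { index := Finset.univ
    left := fun k => (ℛ K x).left ((Fintype.equivFin ↥((ℛ K x).index)).symm k.down)
    right := fun k => (ℛ K x).right ((Fintype.equivFin ↥((ℛ K x).index)).symm k.down)
    eq := canRepr_aux x }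

/-- The contraction `y ↦ ∑ μR(y₍₂₎) • y₍₁₎`. -/
noncomputable def Lc (μR : H →ₗ[K] K) : H →ₗ[K] H :=
  (TensorProduct.rid K H).toLinearMap ∘ₗ (LinearMap.lTensor H μR) ∘ₗ Coalgebra.comul

lemma Lc_repr (μR : H →ₗ[K] K) {x : H} {ι : Type*} (r : Coalgebra.Repr K x ι) :
    Lc μR x = ∑ i ∈ r.index, μR (r.right i) • r.left i := by
  simp only [Lc, LinearMap.coe_comp, LinearEquiv.coe_coe, Function.comp_apply, ← r.eq, map_sum,
    LinearMap.lTensor_tmul, TensorProduct.rid_tmul]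

/-- Convolution of two functionals. -/
noncomputable def convo (f g : H →ₗ[K] K) : H →ₗ[K] K :=
  (LinearMap.mul' K K) ∘ₗ (TensorProduct.map f g) ∘ₗ Coalgebra.comul

lemma convo_repr (f g : H →ₗ[K] K) {x : H} {ι : Type*} (r : Coalgebra.Repr K x ι) :
    convo f g x = ∑ i ∈ r.index, f (r.left i) * g (r.right i) := by
  simp only [convo, LinearMap.coe_comp, Function.comp_apply, ← r.eq, map_sum,
    TensorProduct.map_tmul, LinearMap.mul'_apply]

/-- The contraction `u ⊗ v ↦ ν(u) • v`. -/
noncomputable def Phi (ν : H →ₗ[K] K) : H ⊗[K] H →ₗ[K] H :=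
  (TensorProduct.lid K H).toLinearMap ∘ₗ LinearMap.rTensor H ν

@[simp] lemma Phi_tmul (ν : H →ₗ[K] K) (u v : H) : Phi ν (u ⊗ₜ[K] v) = ν u • v := by
  simp [Phi]

lemma Phi_comul_repr (ν : H →ₗ[K] K) {x : H} {ι : Type*} (r : Coalgebra.Repr K x ι) :
    Phi ν (Coalgebra.comul (R := K) x) = ∑ i ∈ r.index, ν (r.left i) • r.right i := by
  rw [← r.eq, map_sum]
  exact Finset.sum_congr rfl fun i _ => Phi_tmul ν _ _

lemma sum_counit_smul {x : H} {ι : Type*} (r : Coalgebra.Repr K x ι) :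
    ∑ i ∈ r.index, Coalgebra.counit (R := K) (r.left i) • r.right i = x := by
  have h := Coalgebra.sum_counit_tmul_eq (R := K) r
  calc ∑ i ∈ r.index, Coalgebra.counit (R := K) (r.left i) • r.right i
      = TensorProduct.lid K H
          (∑ i ∈ r.index, Coalgebra.counit (R := K) (r.left i) ⊗ₜ[K] r.right i) := by
        rw [map_sum]
        exact Finset.sum_congr rfl fun i _ => by rw [TensorProduct.lid_tmul]
    _ = TensorProduct.lid K H ((1 : K) ⊗ₜ[K] x) := by rw [h]
    _ = x := by simp

lemma sum_smul_counit {x : H} {ι : Type*} (r : Coalgebra.Repr K x ι) :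
    ∑ i ∈ r.index, Coalgebra.counit (R := K) (r.right i) • r.left i = x := by
  have h := Coalgebra.sum_tmul_counit_eq (R := K) r
  calc ∑ i ∈ r.index, Coalgebra.counit (R := K) (r.right i) • r.left i
      = TensorProduct.rid K H
          (∑ i ∈ r.index, r.left i ⊗ₜ[K] Coalgebra.counit (R := K) (r.right i)) := by
        rw [map_sum]
        exact Finset.sum_congr rfl fun i _ => by rw [TensorProduct.rid_tmul]
    _ = TensorProduct.rid K H (x ⊗ₜ[K] (1 : K)) := by rw [h]
    _ = x := by simp

variable (μR : H →ₗ[K] K) (eR : H)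

/-- Key identity (I): `Δe · (x ⊗ 1) = Δe · (1 ⊗ S x)` for a right cointegral `e`. -/
lemma moveS (heR : ∀ x : H, eR * x = Coalgebra.counit (R := K) x • eR) (x : H) :
    Coalgebra.comul (R := K) eR * (x ⊗ₜ[K] (1 : H)) =
      Coalgebra.comul (R := K) eR * ((1 : H) ⊗ₜ[K] antipode (R := K) x) := by
  set r := ℛ K x with hr
  set r1 : ∀ i : r.ι, Coalgebra.Repr K (r.left i) (H × H) := fun i => ℛ K (r.left i) with hr1
  set r2 : ∀ i : r.ι, Coalgebra.Repr K (r.right i) (H × H) := fun i => ℛ K (r.right i) with hr2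
  have key := Coalgebra.sum_tmul_tmul_eq r r1 r2
  set Ψ : H ⊗[K] (H ⊗[K] H) →ₗ[K] H ⊗[K] H :=
    (LinearMap.mulLeft K (Coalgebra.comul (R := K) eR)) ∘ₗ
      (LinearMap.lTensor H (LinearMap.mul' K H)) ∘ₗ
        (LinearMap.lTensor H (LinearMap.lTensor H (antipode (R := K)))) with hΨdef
  have hΨ : ∀ (u v w : H), Ψ (u ⊗ₜ[K] (v ⊗ₜ[K] w)) =
      Coalgebra.comul (R := K) eR * (u ⊗ₜ[K] (v * antipode (R := K) w)) := by
    intro u v w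
    simp [hΨdef, LinearMap.mulLeft_apply]
  have key2 : ∑ i ∈ r.index, ∑ j ∈ (r1 i).index,
      Coalgebra.comul (R := K) eR *
        ((r1 i).left j ⊗ₜ[K] ((r1 i).right j * antipode (R := K) (r.right i))) =
    ∑ i ∈ r.index, ∑ j ∈ (r2 i).index,
      Coalgebra.comul (R := K) eR *
        (r.left i ⊗ₜ[K] ((r2 i).left j * antipode (R := K) ((r2 i).right j))) := by
    have h := congrArg Ψ key
    simpa only [map_sum, hΨ] using h
  calc Coalgebra.comul (R := K) eR * (x ⊗ₜ[K] (1 : H))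
      = ∑ i ∈ r.index, ∑ j ∈ (r2 i).index,
          Coalgebra.comul (R := K) eR *
            (r.left i ⊗ₜ[K] ((r2 i).left j * antipode (R := K) ((r2 i).right j))) := by
        have h1 : (x ⊗ₜ[K] (1 : H)) = ∑ i ∈ r.index,
            r.left i ⊗ₜ[K] (∑ j ∈ (r2 i).index,
              (r2 i).left j * antipode (R := K) ((r2 i).right j)) := by
          conv_lhs => rw [← sum_smul_counit r]
          rw [sum_tmul]
          refine Finset.sum_congr rfl fun i _ => ?_
          rw [smul_tmul, HopfAlgebra.sum_mul_antipode_eq_smul (r2 i)]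
        rw [h1, Finset.mul_sum]
        refine Finset.sum_congr rfl fun i _ => ?_
        rw [tmul_sum, Finset.mul_sum]
    _ = ∑ i ∈ r.index, ∑ j ∈ (r1 i).index,
          Coalgebra.comul (R := K) eR *
            ((r1 i).left j ⊗ₜ[K] ((r1 i).right j * antipode (R := K) (r.right i))) := key2.symm
    _ = Coalgebra.comul (R := K) eR * ((1 : H) ⊗ₜ[K] antipode (R := K) x) := by
        have h2 : ∀ i ∈ r.index, ∑ j ∈ (r1 i).index,
            Coalgebra.comul (R := K) eR *
              ((r1 i).left j ⊗ₜ[K] ((r1 i).right j * antipode (R := K) (r.right i))) =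
            Coalgebra.comul (R := K) eR *
              ((1 : H) ⊗ₜ[K] (Coalgebra.counit (R := K) (r.left i) •
                antipode (R := K) (r.right i))) := by
          intro i _
          have step1 : ∀ j ∈ (r1 i).index,
              Coalgebra.comul (R := K) eR *
                ((r1 i).left j ⊗ₜ[K] ((r1 i).right j * antipode (R := K) (r.right i))) =
              Coalgebra.comul (R := K) eR * ((r1 i).left j ⊗ₜ[K] (r1 i).right j) *
                ((1 : H) ⊗ₜ[K] antipode (R := K) (r.right i)) := by
            intro j _
            rw [mul_assoc, Algebra.TensorProduct.tmul_mul_tmul, mul_one]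
          rw [Finset.sum_congr rfl step1, ← Finset.sum_mul, ← Finset.mul_sum, (r1 i).eq,
            ← Bialgebra.comul_mul, heR (r.left i), map_smul, smul_mul_assoc,
            ← mul_smul_comm, tmul_smul]
        rw [Finset.sum_congr rfl h2, ← Finset.mul_sum, ← tmul_sum]
        have hsum : ∑ i ∈ r.index, Coalgebra.counit (R := K) (r.left i) •
            antipode (R := K) (r.right i) = antipode (R := K) x := by
          calc ∑ i ∈ r.index, Coalgebra.counit (R := K) (r.left i) •
                antipode (R := K) (r.right i)
              = antipode (R := K)
                  (∑ i ∈ r.index, Coalgebra.counit (R := K) (r.left i) • r.right i) := by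
                rw [map_sum]
                exact Finset.sum_congr rfl fun i _ => (map_smul _ _ _).symm
            _ = antipode (R := K) x := by rw [sum_counit_smul r]
        rw [hsum]

/-- `Δ(L e) = ∑ e₍₁₎ ⊗ L(e₍₂₎)`. -/
lemma comul_Lc {ι : Type*} (E : Coalgebra.Repr K eR ι) :
    Coalgebra.comul (R := K) (Lc μR eR) =
      ∑ i ∈ E.index, E.left i ⊗ₜ[K] (Lc μR (E.right i)) := by
  set E1 : ∀ i : E.ι, Coalgebra.Repr K (E.left i) (H × H) := fun i => ℛ K (E.left i) with hE1
  set E2 : ∀ i : E.ι, Coalgebra.Repr K (E.right i) (H × H) := fun i => ℛ K (E.right i) with hE2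
  have key := Coalgebra.sum_tmul_tmul_eq E E1 E2
  set Θ : H ⊗[K] (H ⊗[K] H) →ₗ[K] H ⊗[K] H :=
    LinearMap.lTensor H ((TensorProduct.rid K H).toLinearMap ∘ₗ LinearMap.lTensor H μR) with hΘdef
  have hΘ : ∀ u v w : H, Θ (u ⊗ₜ[K] (v ⊗ₜ[K] w)) = μR w • (u ⊗ₜ[K] v) := by
    intro u v w
    simp [hΘdef, tmul_smul]
  have key2 : ∑ i ∈ E.index, ∑ j ∈ (E1 i).index,
      μR (E.right i) • ((E1 i).left j ⊗ₜ[K] (E1 i).right j) =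
    ∑ i ∈ E.index, ∑ j ∈ (E2 i).index,
      μR ((E2 i).right j) • (E.left i ⊗ₜ[K] (E2 i).left j) := by
    have h := congrArg Θ key
    simpa only [map_sum, hΘ] using h
  calc Coalgebra.comul (R := K) (Lc μR eR)
      = ∑ i ∈ E.index, μR (E.right i) • Coalgebra.comul (R := K) (E.left i) := by
        rw [Lc_repr μR E, map_sum]
        exact Finset.sum_congr rfl fun i _ => map_smul _ _ _
    _ = ∑ i ∈ E.index, ∑ j ∈ (E1 i).index,
          μR (E.right i) • ((E1 i).left j ⊗ₜ[K] (E1 i).right j) := by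
        refine Finset.sum_congr rfl fun i _ => ?_
        rw [← (E1 i).eq, Finset.smul_sum]
    _ = ∑ i ∈ E.index, ∑ j ∈ (E2 i).index,
          μR ((E2 i).right j) • (E.left i ⊗ₜ[K] (E2 i).left j) := key2
    _ = ∑ i ∈ E.index, E.left i ⊗ₜ[K] (Lc μR (E.right i)) := by
        refine Finset.sum_congr rfl fun i _ => ?_
        rw [Lc_repr μR (E2 i), tmul_sum]
        exact Finset.sum_congr rfl fun j _ => by rw [tmul_smul]

lemma counit_Lc (hnorm : μR eR = 1) :
    Coalgebra.counit (R := K) (Lc μR eR) = 1 := by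
  set E := ℛ K eR with hE
  rw [Lc_repr μR E, map_sum]
  calc ∑ i ∈ E.index, Coalgebra.counit (R := K) (μR (E.right i) • E.left i)
      = μR (∑ i ∈ E.index, Coalgebra.counit (R := K) (E.left i) • E.right i) := by
        rw [map_sum]
        refine Finset.sum_congr rfl fun i _ => ?_
        rw [map_smul, map_smul, smul_eq_mul, smul_eq_mul, mul_comm]
    _ = 1 := by rw [sum_counit_smul E, hnorm]

/-- A right integral in `H*` vanishing on the right cointegral vanishes identically. -/
lemma rightIntegral_eq_zero [FiniteDimensional K H]
    (heR : ∀ x : H, eR * x = Coalgebra.counit (R := K) x • eR)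
    (hnorm : μR eR = 1)
    (ν : H →ₗ[K] K)
    (hν : ∀ x : H, Phi ν (Coalgebra.comul (R := K) x) = ν x • (1 : H))
    (hνe : ν eR = 0) : ν = 0 := by
  set E := ℛ K eR with hE
  -- (Gν) : ∑ ν(e₁ z) • e₂ = 0 for all z
  have hGν : ∀ z : H, ∑ i ∈ E.index, ν (E.left i * z) • E.right i = 0 := by
    intro z
    have h1 : Phi ν (Coalgebra.comul (R := K) eR * (z ⊗ₜ[K] (1 : H))) =
        ∑ i ∈ E.index, ν (E.left i * z) • E.right i := by
      rw [← E.eq, Finset.sum_mul, map_sum]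
      refine Finset.sum_congr rfl fun i _ => ?_
      rw [Algebra.TensorProduct.tmul_mul_tmul, mul_one, Phi_tmul]
    have h2 : Phi ν (Coalgebra.comul (R := K) eR *
        ((1 : H) ⊗ₜ[K] antipode (R := K) z)) = 0 := by
      rw [← E.eq, Finset.sum_mul, map_sum]
      have hterm : ∀ i ∈ E.index,
          Phi ν ((E.left i ⊗ₜ[K] E.right i) * ((1 : H) ⊗ₜ[K] antipode (R := K) z)) =
          (ν (E.left i) • E.right i) * antipode (R := K) z := by
        intro i _
        rw [Algebra.TensorProduct.tmul_mul_tmul, mul_one, Phi_tmul, smul_mul_assoc]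
      have hsum : ∑ i ∈ E.index, ν (E.left i) • E.right i = ν eR • (1 : H) := by
        rw [← Phi_comul_repr ν E, hν eR]
      rw [Finset.sum_congr rfl hterm, ← Finset.sum_mul, hsum, hνe, zero_smul, zero_mul]
    rw [← h1, moveS eR heR z, h2]
  -- the distinguished element and the decomposition of 1
  have hΔa := comul_Lc μR eR E
  set a := Lc μR eR with ha
  let Ra : Coalgebra.Repr K a (H × H) :=
    ⟨E.index, E.left, fun i => Lc μR (E.right i), hΔa.symm⟩
  have hone : ∑ i ∈ E.index, E.left i * antipode (R := K) (Lc μR (E.right i)) = (1 : H) := by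
    have h := HopfAlgebra.sum_mul_antipode_eq_smul (R := K) Ra
    rw [counit_Lc μR eR hnorm, one_smul] at h
    exact h
  -- kill ν using a basis
  ext x
  set B := Module.finBasis K H with hB
  have hx : x = ∑ i ∈ E.index,
      E.left i * (antipode (R := K) (Lc μR (E.right i)) * x) := by
    calc x = (1 : H) * x := (one_mul x).symm
      _ = (∑ i ∈ E.index, E.left i * antipode (R := K) (Lc μR (E.right i))) * x := by
          rw [hone]
      _ = ∑ i ∈ E.index, E.left i * (antipode (R := K) (Lc μR (E.right i)) * x) := by
          rw [Finset.sum_mul]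
          exact Finset.sum_congr rfl fun i _ => mul_assoc _ _ _
  have hexp : ∀ i ∈ E.index,
      ν (E.left i * (antipode (R := K) (Lc μR (E.right i)) * x)) =
      ∑ k, B.repr (Lc μR (E.right i)) k * ν (E.left i * (antipode (R := K) (B k) * x)) := by
    intro i _
    conv_lhs => rw [← Module.Basis.sum_repr B (Lc μR (E.right i))]
    rw [map_sum, Finset.sum_mul, Finset.mul_sum, map_sum]
    refine Finset.sum_congr rfl fun k _ => ?_
    rw [map_smul, smul_mul_assoc, mul_smul_comm, map_smul, smul_eq_mul]
  have hinner : ∀ k, ∑ i ∈ E.index,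
      B.repr (Lc μR (E.right i)) k * ν (E.left i * (antipode (R := K) (B k) * x)) = 0 := by
    intro k
    have h0 := hGν (antipode (R := K) (B k) * x)
    have h1 := congrArg (fun t => B.coord k (Lc μR t)) h0
    simp only [map_sum, map_smul, map_zero, smul_eq_mul] at h1
    rw [← h1]
    refine Finset.sum_congr rfl fun i _ => ?_
    rw [Module.Basis.coord_apply, mul_comm]
  calc ν x = ν (∑ i ∈ E.index,
      E.left i * (antipode (R := K) (Lc μR (E.right i)) * x)) := by rw [← hx]
    _ = ∑ i ∈ E.index, ∑ k, B.repr (Lc μR (E.right i)) k *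
          ν (E.left i * (antipode (R := K) (B k) * x)) := by
        rw [map_sum]
        exact Finset.sum_congr rfl hexp
    _ = ∑ k, ∑ i ∈ E.index, B.repr (Lc μR (E.right i)) k *
          ν (E.left i * (antipode (R := K) (B k) * x)) := Finset.sum_comm
    _ = 0 := by
        rw [Finset.sum_congr rfl fun k _ => hinner k]
        simp
    _ = (0 : H →ₗ[K] K) x := by simp

/-- `f * μR` is a right integral in `H*`. -/
lemma RI_convo
    (hμ : ∀ x : H, Phi μR (Coalgebra.comul (R := K) x) = μR x • (1 : H))
    (f : H →ₗ[K] K) (x : H) :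
    Phi (convo f μR) (Coalgebra.comul (R := K) x) = (convo f μR) x • (1 : H) := by
  set r := ℛ K x with hr
  set r1 : ∀ i : r.ι, Coalgebra.Repr K (r.left i) (H × H) := fun i => ℛ K (r.left i) with hr1
  set r2 : ∀ i : r.ι, Coalgebra.Repr K (r.right i) (H × H) := fun i => ℛ K (r.right i) with hr2
  have key := Coalgebra.sum_tmul_tmul_eq r r1 r2
  set Ξ : H ⊗[K] (H ⊗[K] H) →ₗ[K] H := Phi f ∘ₗ LinearMap.lTensor H (Phi μR) with hΞdef
  have hΞ : ∀ u v w : H, Ξ (u ⊗ₜ[K] (v ⊗ₜ[K] w)) = f u • (μR v • w) := by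
    intro u v w
    have h : Ξ (u ⊗ₜ[K] (v ⊗ₜ[K] w)) = μR v • (f u • w) := by simp [hΞdef]
    rw [h, smul_comm]
  have key2 : ∑ i ∈ r.index, ∑ j ∈ (r1 i).index,
      f ((r1 i).left j) • (μR ((r1 i).right j) • r.right i) =
    ∑ i ∈ r.index, ∑ j ∈ (r2 i).index,
      f (r.left i) • (μR ((r2 i).left j) • (r2 i).right j) := by
    have h := congrArg Ξ key
    simpa only [map_sum, hΞ] using h
  calc Phi (convo f μR) (Coalgebra.comul (R := K) x)
      = ∑ i ∈ r.index, (convo f μR) (r.left i) • r.right i := Phi_comul_repr _ r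
    _ = ∑ i ∈ r.index, ∑ j ∈ (r1 i).index,
          f ((r1 i).left j) • (μR ((r1 i).right j) • r.right i) := by
        refine Finset.sum_congr rfl fun i _ => ?_
        rw [convo_repr f μR (r1 i), Finset.sum_smul]
        exact Finset.sum_congr rfl fun j _ => mul_smul _ _ _
    _ = ∑ i ∈ r.index, ∑ j ∈ (r2 i).index,
          f (r.left i) • (μR ((r2 i).left j) • (r2 i).right j) := key2
    _ = ∑ i ∈ r.index, f (r.left i) • (μR (r.right i) • (1 : H)) := by
        refine Finset.sum_congr rfl fun i _ => ?_
        rw [← Finset.smul_sum, ← Phi_comul_repr μR (r2 i), hμ (r.right i)]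
    _ = (convo f μR) x • (1 : H) := by
        rw [convo_repr f μR r, Finset.sum_smul]
        exact Finset.sum_congr rfl fun i _ => by rw [smul_smul]

end DistinguishedAux

/-- For a finite-dimensional Hopf algebra `H` with right integral `μR` and right cointegral
`eR` normalized by `μR eR = 1`, the distinguished element `a := μR (eR₍₂₎) • eR₍₁₎` is
group-like: `Δ a = a ⊗ a` and `ε a = 1`. -/
theorem distinguished_element_is_grouplike
    (K H : Type*) [Field K] [Ring H] [HopfAlgebra K H] [FiniteDimensional K H]
    (μR : H →ₗ[K] K) (eR : H)
    (hμR : ∀ (x : H) {ι : Type*} (r : Coalgebra.Repr K x ι),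
      ∑ i ∈ r.index, μR (r.left i) • r.right i = μR x • (1 : H))
    (heR : ∀ x : H, eR * x = Coalgebra.counit (R := K) x • eR)
    (hnorm : μR eR = 1) :
    ∀ {ι' : Type*} (re : Coalgebra.Repr K eR ι'),
      Coalgebra.comul (R := K) (∑ j ∈ re.index, μR (re.right j) • re.left j) =
          (∑ j ∈ re.index, μR (re.right j) • re.left j) ⊗ₜ[K]
            (∑ j ∈ re.index, μR (re.right j) • re.left j) ∧
        Coalgebra.counit (R := K) (∑ j ∈ re.index, μR (re.right j) • re.left j) = 1 := by
  intro ι' re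
  classical
  have hre : ∑ j ∈ re.index, μR (re.right j) • re.left j = DistinguishedAux.Lc μR eR :=
    (DistinguishedAux.Lc_repr μR re).symm
  rw [hre]
  set a := DistinguishedAux.Lc μR eR with ha
  -- map form of the right-integral property of μR
  have hμ : ∀ x : H, DistinguishedAux.Phi μR (Coalgebra.comul (R := K) x) = μR x • (1 : H) := by
    intro x
    rw [DistinguishedAux.Phi_comul_repr μR (DistinguishedAux.canRepr x)]
    exact hμR x (DistinguishedAux.canRepr x)
  -- Step D : f * μR = f(a) • μR for every f
  have hD : ∀ f : H →ₗ[K] K, DistinguishedAux.convo f μR = f a • μR := by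
    intro f
    have hνe : (DistinguishedAux.convo f μR - f a • μR) eR = 0 := by
      have h1 : DistinguishedAux.convo f μR eR =
          ∑ i ∈ (ℛ K eR).index, f ((ℛ K eR).left i) * μR ((ℛ K eR).right i) :=
        DistinguishedAux.convo_repr f μR (ℛ K eR)
      have h2 : f a = ∑ i ∈ (ℛ K eR).index, f ((ℛ K eR).left i) * μR ((ℛ K eR).right i) := by
        rw [ha, DistinguishedAux.Lc_repr μR (ℛ K eR), map_sum]
        exact Finset.sum_congr rfl fun i _ => by rw [map_smul, smul_eq_mul, mul_comm]
      simp [h1, h2, hnorm]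
    have hRI : ∀ x : H, DistinguishedAux.Phi (DistinguishedAux.convo f μR - f a • μR)
        (Coalgebra.comul (R := K) x) =
        (DistinguishedAux.convo f μR - f a • μR) x • (1 : H) := by
      intro x
      have hc := DistinguishedAux.RI_convo μR hμ f x
      have hm := hμ x
      have hlin : DistinguishedAux.Phi (DistinguishedAux.convo f μR - f a • μR)
          (Coalgebra.comul (R := K) x) =
          DistinguishedAux.Phi (DistinguishedAux.convo f μR) (Coalgebra.comul (R := K) x) -
            f a • DistinguishedAux.Phi μR (Coalgebra.comul (R := K) x) := by
        simp only [DistinguishedAux.Phi, LinearMap.coe_comp, LinearEquiv.coe_coe,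
          Function.comp_apply, LinearMap.rTensor_sub, LinearMap.rTensor_smul,
          LinearMap.sub_apply, LinearMap.smul_apply, map_sub, map_smul]
      rw [hlin, hc, hm, LinearMap.sub_apply, LinearMap.smul_apply, sub_smul, smul_eq_mul,
        mul_smul]
    have h0 := DistinguishedAux.rightIntegral_eq_zero μR eR heR hnorm
      (DistinguishedAux.convo f μR - f a • μR) hRI hνe
    exact sub_eq_zero.mp h0
  -- Step E : Lc μR y = μR y • a for every y
  have hL : ∀ y : H, DistinguishedAux.Lc μR y = μR y • a := by
    intro y
    set B := Module.finBasis K H with hB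
    refine B.ext_elem fun k => ?_
    have hcoord := hD (B.coord k)
    have h1 : DistinguishedAux.convo (B.coord k) μR y = B.coord k a * μR y := by
      rw [hcoord, LinearMap.smul_apply, smul_eq_mul]
    have h2 : B.coord k (DistinguishedAux.Lc μR y) =
        DistinguishedAux.convo (B.coord k) μR y := by
      rw [DistinguishedAux.Lc_repr μR (ℛ K y),
        DistinguishedAux.convo_repr (B.coord k) μR (ℛ K y), map_sum]
      exact Finset.sum_congr rfl fun i _ => by rw [map_smul, smul_eq_mul, mul_comm]
    have h3 : B.repr (DistinguishedAux.Lc μR y) k = B.coord k (DistinguishedAux.Lc μR y) := by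
      rw [Module.Basis.coord_apply]
    have h4 : B.repr (μR y • a) k = μR y * B.repr a k := by
      rw [map_smul]; rfl
    rw [h3, h2, h1, h4, Module.Basis.coord_apply, mul_comm]
  constructor
  · set E := ℛ K eR with hE
    have hΔa := DistinguishedAux.comul_Lc μR eR E
    calc Coalgebra.comul (R := K) a
        = ∑ i ∈ E.index, E.left i ⊗ₜ[K] (DistinguishedAux.Lc μR (E.right i)) := hΔa
      _ = ∑ i ∈ E.index, (μR (E.right i) • E.left i) ⊗ₜ[K] a := by
          refine Finset.sum_congr rfl fun i _ => ?_
          rw [hL (E.right i), tmul_smul, smul_tmul']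
      _ = a ⊗ₜ[K] a := by
          rw [← sum_tmul, ← DistinguishedAux.Lc_repr μR E]
  · exact DistinguishedAux.counit_Lc μR eR hnorm
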